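/- Let G be the graph constructed from a One-in-Three 3SAT instance as follows: G has a clique on the clause vertices Q; for each variable x_i a pair of adjacent vertices x_i and a_i with a_i adjacent only to x_i; and each clause vertex adjacent to exactly the variable vertices of its clause. Then no perfect code of G contains any clause vertex q ∈ Q; consequently, for any perfect code D of G, each clause vertex has exactly one neighbor among the variable vertices in D, and for each pair {x_i, a_i}, a_i ∈ D if and only if x_i ∉ D. -/

import Mathlib

/-- A perfect code in `G` is an independent set `D` such that every vertex is either in
`D` or has exactly one neighbor in `D`. -/
def IsPerfectCode {V : Type*} (G : SimpleGraph V) (D : Set V) : Prop :=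
  D.Pairwise (fun u v => ¬ G.Adj u v) ∧
  ∀ v : V, v ∈ D ∨ ∃! u : V, u ∈ D ∧ G.Adj v u


/-- The graph built from a One-in-Three 3SAT instance with clauses `Q` over variables
`Fin k`: clause vertices `Sum.inl j` form a clique, each variable has a pair of adjacent
vertices `Sum.inr (Sum.inl i)` (the variable vertex) and `Sum.inr (Sum.inr i)` (the
pendant vertex `a i`, adjacent only to the variable vertex), and each clause vertex is
adjacent exactly to the variable vertices of its clause. -/
def satGraph (k s : ℕ) (Q : Fin s → Finset (Fin k)) :
    SimpleGraph (Fin s ⊕ (Fin k ⊕ Fin k)) :=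
  SimpleGraph.fromRel fun u v =>
    match u, v with
    | Sum.inl _, Sum.inl _ => True
    | Sum.inl j, Sum.inr (Sum.inl i) => i ∈ Q j
    | Sum.inr (Sum.inl i), Sum.inr (Sum.inr i2) => i = i2
    | _, _ => False
section
variable {k s : ℕ} {Q : Fin s → Finset (Fin k)}

lemma adj_pendant {i : Fin k} {u : Fin s ⊕ Fin k ⊕ Fin k}
    (h : (satGraph k s Q).Adj (Sum.inr (Sum.inr i)) u) : u = Sum.inr (Sum.inl i) := by
  rcases u with j | i' | i' <;> simp [satGraph] at h <;> simp [h]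

lemma adj_clause {j : Fin s} {u : Fin s ⊕ Fin k ⊕ Fin k}
    (h : (satGraph k s Q).Adj (Sum.inl j) u) :
    (∃ j', j' ≠ j ∧ u = Sum.inl j') ∨ (∃ i, i ∈ Q j ∧ u = Sum.inr (Sum.inl i)) := by
  rcases u with j' | i' | i' <;> simp [satGraph] at h
  · exact Or.inl ⟨j', fun e => h (e ▸ rfl), rfl⟩
  · exact Or.inr ⟨i', h, rfl⟩

end

theorem satGraph_perfectCode_no_clause_vertex (k s : ℕ) (Q : Fin s → Finset (Fin k))
    (hQ : ∀ j, (Q j).card = 3)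
    (D : Set (Fin s ⊕ Fin k ⊕ Fin k)) (hD : IsPerfectCode (satGraph k s Q) D) :
    (∀ j : Fin s, Sum.inl j ∉ D) ∧
    (∀ j : Fin s, ∃! i : Fin k, i ∈ Q j ∧ Sum.inr (Sum.inl i) ∈ D) ∧
    (∀ i : Fin k, Sum.inr (Sum.inr i) ∈ D ↔ Sum.inr (Sum.inl i) ∉ D) := by
  obtain ⟨hind, hdom⟩ := hD
  have hclause : ∀ j : Fin s, Sum.inl j ∉ D := by
    intro j hj
    obtain ⟨i, hi⟩ := Finset.card_pos.mp (by rw [hQ j]; norm_num)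
    have hadj : (satGraph k s Q).Adj (Sum.inl j) (Sum.inr (Sum.inl i)) := by
      simp [satGraph, hi]
    have hx : Sum.inr (Sum.inl i) ∉ D := fun hx => hind hj hx (by simp) hadj
    rcases hdom (Sum.inr (Sum.inr i)) with ha | ⟨u, ⟨huD, huadj⟩, _⟩
    · rcases hdom (Sum.inr (Sum.inl i)) with h | ⟨u, _, huniq⟩
      · exact hx h
      · have e1 := huniq (Sum.inl j) ⟨hj, hadj.symm⟩
        have e2 := huniq (Sum.inr (Sum.inr i)) ⟨ha, by simp [satGraph]⟩
        rw [← e1] at e2; exact nomatch e2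
    · exact hx (adj_pendant huadj ▸ huD)
  refine ⟨hclause, ?_, ?_⟩
  · intro j
    rcases hdom (Sum.inl j) with h | ⟨u, ⟨huD, huadj⟩, huniq⟩
    · exact absurd h (hclause j)
    · rcases adj_clause huadj with ⟨j', _, rfl⟩ | ⟨i, hiQ, rfl⟩
      · exact absurd huD (hclause j')
      · refine ⟨i, ⟨hiQ, huD⟩, ?_⟩
        intro i' ⟨hi'Q, hi'D⟩
        have := huniq (Sum.inr (Sum.inl i')) ⟨hi'D, by simp [satGraph, hi'Q]⟩
        simpa using this
  · intro i
    constructor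
    · intro ha hx
      exact hind hx ha (by simp) (by simp [satGraph])
    · intro hx
      rcases hdom (Sum.inr (Sum.inr i)) with h | ⟨u, ⟨huD, huadj⟩, _⟩
      · exact h
      · exact absurd (adj_pendant huadj ▸ huD) hx
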